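/- Let I, J ⊆ ℝ be open intervals, ψ : I × J → ℂ of class C¹, γ : I × J → ℝ continuous, and let T, e₁, e₂ : I × J → ℝ³ be C¹ maps satisfying, with N = e₁ + i e₂, the systems T_x = Re(conj(ψ) N), N_x = −ψ T, T_t = Im(conj(ψ_x) N), N_t = −i ψ_x T + i γ N on I × J. If (T, e₁, e₂)(t₀, x₀) is an orthonormal basis of ℝ³ for some (t₀, x₀) ∈ I × J, then (T, e₁, e₂)(t,x) is an orthonormal basis of ℝ³ for every (t,x) ∈ I × J. -/

import Mathlib

noncomputable section

/-- Dot product in ℝ³. -/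
def dot3 (a b : Fin 3 → ℝ) : ℝ := ∑ i, a i * b i

/-- Orthonormality of a triple of vectors in ℝ³ (which is then automatically a basis). -/
def IsOrthonormalTriple (T e₁ e₂ : Fin 3 → ℝ) : Prop :=
  dot3 T T = 1 ∧ dot3 e₁ e₁ = 1 ∧ dot3 e₂ e₂ = 1 ∧
  dot3 T e₁ = 0 ∧ dot3 T e₂ = 0 ∧ dot3 e₁ e₂ = 0

open Set

/-- Propagation of orthonormality for a frame satisfying a linear ODE with skew-symmetric
coefficient matrix. -/
lemma frame_ortho (s : Set ℝ) (hso : IsOpen s) (hsc : s.OrdConnected)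
    (F A : ℝ → Fin 3 → Fin 3 → ℝ)
    (hA : ContinuousOn A s)
    (hskew : ∀ x ∈ s, ∀ i j, A x j i = - A x i j)
    (hF : ∀ x ∈ s, ∀ i, HasDerivAt (fun y => F y i) (fun m => ∑ j, A x i j * F x j m) x)
    (x₀ : ℝ) (hx₀ : x₀ ∈ s)
    (h₀ : ∀ i k, dot3 (F x₀ i) (F x₀ k) = if i = k then 1 else 0) :
    ∀ x ∈ s, ∀ i k, dot3 (F x i) (F x k) = if i = k then 1 else 0 := by
  intro x hx
  set a := min x₀ x with ha_def
  set b := max x₀ x with hb_def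
  have hab : a ≤ b := min_le_max
  have hIccs : Icc a b ⊆ s := by
    have := hsc.uIcc_subset hx₀ hx
    rwa [uIcc] at this
  have ha : a ∈ s := hIccs ⟨le_rfl, hab⟩
  have hb : b ∈ s := hIccs ⟨hab, le_rfl⟩
  obtain ⟨a', ha's, ha'lt⟩ : ∃ a', a' ∈ s ∧ a' < a := by
    obtain ⟨ε, hε, hball⟩ := Metric.isOpen_iff.mp hso a ha
    refine ⟨a - ε / 2, hball ?_, by linarith⟩
    rw [Metric.mem_ball, Real.dist_eq]
    rw [show a - ε / 2 - a = -(ε / 2) by ring, abs_neg, abs_of_pos (by linarith)]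
    linarith
  obtain ⟨b', hb's, hb'lt⟩ : ∃ b', b' ∈ s ∧ b < b' := by
    obtain ⟨ε, hε, hball⟩ := Metric.isOpen_iff.mp hso b hb
    refine ⟨b + ε / 2, hball ?_, by linarith⟩
    rw [Metric.mem_ball, Real.dist_eq]
    rw [show b + ε / 2 - b = ε / 2 by ring, abs_of_pos (by linarith)]
    linarith
  have ha'b' : a' ≤ b' := by linarith
  have hsub : Icc a' b' ⊆ s := hsc.out ha's hb's
  -- bound on A
  obtain ⟨C, hC⟩ := isCompact_Icc.exists_bound_of_continuousOn (hA.mono hsub)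
  have hC0 : 0 ≤ C := le_trans (norm_nonneg _) (hC a' ⟨le_rfl, ha'b'⟩)
  have hCij : ∀ y ∈ Icc a' b', ∀ i j, |A y i j| ≤ C := by
    intro y hy i j
    calc |A y i j| = ‖A y i j‖ := rfl
      _ ≤ ‖A y i‖ := norm_le_pi_norm (A y i) j
      _ ≤ ‖A y‖ := norm_le_pi_norm (A y) i
      _ ≤ C := hC y hy
  -- clamp
  set cl : ℝ → ℝ := fun t => max a' (min b' t) with hcl_def
  have hclmem : ∀ t, cl t ∈ Icc a' b' :=
    fun t => ⟨le_max_left _ _, max_le ha'b' (min_le_left _ _)⟩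
  have hcleq : ∀ t ∈ Icc a' b', cl t = t := by
    intro t ht
    rw [hcl_def]
    simp only
    rw [min_eq_right ht.2, max_eq_right ht.1]
  -- the vector field
  set v : ℝ → (Fin 3 → Fin 3 → ℝ) → (Fin 3 → Fin 3 → ℝ) :=
    fun t G i k => (∑ j, A (cl t) i j * G j k) + ∑ j, A (cl t) k j * G i j with hv_def
  set K : NNReal := ⟨6 * C + 1, by positivity⟩ with hK_def
  have hlip : ∀ t, LipschitzOnWith K (v t) Set.univ := by
    intro t
    apply LipschitzOnWith.of_dist_le_mul
    intro G _ G' _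
    have hd : ∀ j k, |G j k - G' j k| ≤ dist G G' := by
      intro j k
      calc |G j k - G' j k| = dist (G j k) (G' j k) := (Real.dist_eq _ _).symm
        _ ≤ dist (G j) (G' j) := dist_le_pi_dist (G j) (G' j) k
        _ ≤ dist G G' := dist_le_pi_dist G G' j
    have hKnn : (0:ℝ) ≤ (K : ℝ) * dist G G' := by positivity
    rw [dist_pi_le_iff hKnn]
    intro i
    rw [dist_pi_le_iff hKnn]
    intro k
    rw [Real.dist_eq]
    have habs : ∀ p q : Fin 3, |A (cl t) p q| ≤ C := fun p q => hCij _ (hclmem t) p q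
    have key : ∀ (p : Fin 3) (f g : Fin 3 → ℝ), (∀ j, |f j - g j| ≤ dist G G') →
        |∑ j, A (cl t) p j * f j - ∑ j, A (cl t) p j * g j| ≤ 3 * (C * dist G G') := by
      intro p f g hfg
      rw [← Finset.sum_sub_distrib]
      calc |∑ j, (A (cl t) p j * f j - A (cl t) p j * g j)|
          ≤ ∑ j, |A (cl t) p j * f j - A (cl t) p j * g j| := Finset.abs_sum_le_sum_abs _ _
        _ ≤ ∑ _j : Fin 3, C * dist G G' := by
            apply Finset.sum_le_sum
            intro j _
            rw [← mul_sub, abs_mul]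
            exact mul_le_mul (habs p j) (hfg j) (abs_nonneg _) hC0
        _ = 3 * (C * dist G G') := by
            rw [Finset.sum_const]
            simp
    have h1 := key i (fun j => G j k) (fun j => G' j k) (fun j => hd j k)
    have h2 := key k (fun j => G i j) (fun j => G' i j) (fun j => hd i j)
    have hsplit : v t G i k - v t G' i k =
        ((∑ j, A (cl t) i j * G j k) - ∑ j, A (cl t) i j * G' j k) +
        ((∑ j, A (cl t) k j * G i j) - ∑ j, A (cl t) k j * G' i j) := by
      rw [hv_def]; ring
    rw [hsplit]
    have hKval : (K : ℝ) = 6 * C + 1 := rfl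
    calc |_ + _| ≤ _ := abs_add_le _ _
      _ ≤ 3 * (C * dist G G') + 3 * (C * dist G G') := add_le_add h1 h2
      _ ≤ (K : ℝ) * dist G G' := by rw [hKval]; nlinarith [dist_nonneg (x := G) (y := G')]
  -- the two solutions
  set f : ℝ → Fin 3 → Fin 3 → ℝ := fun y i k => dot3 (F y i) (F y k) with hf_def
  set g0 : Fin 3 → Fin 3 → ℝ := fun i k => if i = k then 1 else 0 with hg0_def
  have hf' : ∀ y ∈ Ioo a' b', HasDerivAt f (v y (f y)) y := by
    intro y hy
    have hys : y ∈ s := hsub (Ioo_subset_Icc_self hy)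
    have hcly : cl y = y := hcleq y (Ioo_subset_Icc_self hy)
    rw [hasDerivAt_pi]
    intro i
    rw [hasDerivAt_pi]
    intro k
    have hFc : ∀ p m, HasDerivAt (fun z => F z p m) (∑ j, A y p j * F y j m) y :=
      fun p m => hasDerivAt_pi.mp (hF y hys p) m
    have hsum : HasDerivAt (fun z => ∑ m, F z i m * F z k m)
        (∑ m, ((∑ j, A y i j * F y j m) * F y k m + F y i m * (∑ j, A y k j * F y j m))) y :=
      HasDerivAt.fun_sum (fun m _ => (hFc i m).mul (hFc k m))
    have heq : v y (f y) i k
        = ∑ m, ((∑ j, A y i j * F y j m) * F y k m + F y i m * (∑ j, A y k j * F y j m)) := by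
      rw [hv_def, hf_def]
      simp only [hcly, dot3]
      rw [Finset.sum_add_distrib]
      congr 1
      · simp only [Finset.mul_sum, Finset.sum_mul]
        rw [Finset.sum_comm]
        exact Finset.sum_congr rfl fun m _ => Finset.sum_congr rfl fun j _ => by ring
      · simp only [Finset.mul_sum, Finset.sum_mul]
        rw [Finset.sum_comm]
        exact Finset.sum_congr rfl fun m _ => Finset.sum_congr rfl fun j _ => by ring
    rw [heq]
    exact hsum
  have hg' : ∀ y ∈ Ioo a' b', HasDerivAt (fun _ : ℝ => g0) (v y g0) y := by
    intro y hy
    have hys : y ∈ s := hsub (Ioo_subset_Icc_self hy)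
    have hcly : cl y = y := hcleq y (Ioo_subset_Icc_self hy)
    have hz : v y g0 = 0 := by
      funext i k
      rw [hv_def, hg0_def]
      simp only [hcly, mul_ite, mul_one, mul_zero]
      rw [Finset.sum_ite_eq' Finset.univ k (fun j => A y i j),
        Finset.sum_ite_eq Finset.univ i (fun j => A y k j)]
      simp only [Finset.mem_univ, if_true]
      have := hskew y hys i k
      simp [Pi.zero_apply]
      linarith
    rw [hz]
    exact hasDerivAt_const y g0
  have hx₀mem : x₀ ∈ Ioo a' b' :=
    ⟨lt_of_lt_of_le ha'lt (min_le_left _ _), lt_of_le_of_lt (le_max_left _ _) hb'lt⟩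
  have hxmem : x ∈ Ioo a' b' :=
    ⟨lt_of_lt_of_le ha'lt (min_le_right _ _), lt_of_le_of_lt (le_max_right _ _) hb'lt⟩
  have heq0 : f x₀ = g0 := by
    funext i k
    rw [hf_def, hg0_def]
    exact h₀ i k
  have huniq := ODE_solution_unique_of_mem_Ioo (v := v) (s := fun _ => Set.univ)
    (f := f) (g := fun _ => g0) (fun t _ => hlip t) hx₀mem
    (fun y hy => ⟨hf' y hy, trivial⟩) (fun y hy => ⟨hg' y hy, trivial⟩) heq0
  intro i k
  have := congrFun (congrFun (huniq hxmem) i) k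
  rw [hf_def] at this
  exact this

lemma partialDiffAt_snd {E : Type*} [NormedAddCommGroup E] [NormedSpace ℝ E]
    {I J : Set ℝ} (hIopen : IsOpen I) (hJopen : IsOpen J)
    {f : ℝ → ℝ → E} (hf : ContDiffOn ℝ 1 (fun p : ℝ × ℝ => f p.1 p.2) (I ×ˢ J))
    {t x : ℝ} (ht : t ∈ I) (hx : x ∈ J) :
    DifferentiableAt ℝ (fun y => f t y) x := by
  have h1 : DifferentiableAt ℝ (fun p : ℝ × ℝ => f p.1 p.2) (t, x) :=
    (hf.differentiableOn one_ne_zero).differentiableAt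
      ((hIopen.prod hJopen).mem_nhds ⟨ht, hx⟩)
  exact h1.comp x ((differentiableAt_const t).prodMk differentiableAt_id)

lemma partialDiffAt_fst {E : Type*} [NormedAddCommGroup E] [NormedSpace ℝ E]
    {I J : Set ℝ} (hIopen : IsOpen I) (hJopen : IsOpen J)
    {f : ℝ → ℝ → E} (hf : ContDiffOn ℝ 1 (fun p : ℝ × ℝ => f p.1 p.2) (I ×ˢ J))
    {t x : ℝ} (ht : t ∈ I) (hx : x ∈ J) :
    DifferentiableAt ℝ (fun s => f s x) t := by
  have h1 : DifferentiableAt ℝ (fun p : ℝ × ℝ => f p.1 p.2) (t, x) :=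
    (hf.differentiableOn one_ne_zero).differentiableAt
      ((hIopen.prod hJopen).mem_nhds ⟨ht, hx⟩)
  exact h1.comp t ((differentiableAt_id : DifferentiableAt ℝ id t).prodMk (differentiableAt_const x))

lemma pi_complex_deriv {n : ℝ → Fin 3 → ℂ} {u w : ℝ → Fin 3 → ℝ} {x : ℝ} {D : Fin 3 → ℂ}
    (hu : DifferentiableAt ℝ u x) (hw : DifferentiableAt ℝ w x)
    (h : ∀ᶠ z in nhds x, ∀ i, n z i = (u z i : ℂ) + Complex.I * w z i)
    (hd : deriv n x = D) :
    HasDerivAt u (fun i => (D i).re) x ∧ HasDerivAt w (fun i => (D i).im) x := by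
  have hmix : DifferentiableAt ℝ (fun z i => ((u z i : ℂ) + Complex.I * w z i)) x := by
    rw [differentiableAt_pi]
    intro i
    have hui : DifferentiableAt ℝ (fun z => u z i) x := differentiableAt_pi.mp hu i
    have hwi : DifferentiableAt ℝ (fun z => w z i) x := differentiableAt_pi.mp hw i
    exact ((Complex.ofRealCLM.differentiable.differentiableAt).comp x hui).add
      (((Complex.ofRealCLM.differentiable.differentiableAt).comp x hwi).const_mul _)
  have hn : DifferentiableAt ℝ n x :=
    hmix.congr_of_eventuallyEq (h.mono fun z hz => funext hz)
  have hdn : HasDerivAt n D x := hd ▸ hn.hasDerivAt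
  constructor
  · rw [hasDerivAt_pi]
    intro i
    have hni : HasDerivAt (fun z => n z i) (D i) x := hasDerivAt_pi.mp hdn i
    have hre : HasDerivAt (fun z => (n z i).re) (D i).re x :=
      Complex.reCLM.hasFDerivAt.comp_hasDerivAt x hni
    exact hre.congr_of_eventuallyEq (h.mono fun z hz => by show u z i = (n z i).re; rw [hz i]; simp)
  · rw [hasDerivAt_pi]
    intro i
    have hni : HasDerivAt (fun z => n z i) (D i) x := hasDerivAt_pi.mp hdn i
    have him : HasDerivAt (fun z => (n z i).im) (D i).im x :=
      Complex.imCLM.hasFDerivAt.comp_hasDerivAt x hni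
    exact him.congr_of_eventuallyEq (h.mono fun z hz => by show w z i = (n z i).im; rw [hz i]; simp)

/-- **Propagation of orthonormality of the frame.** If `(T, e₁, e₂)` are `C¹` fields on
`I × J` satisfying, with `N = e₁ + i e₂`, the systems `T_x = Re(conj ψ · N)`, `N_x = −ψ T`,
`T_t = Im(conj ψ_x · N)`, `N_t = −i ψ_x T + i γ N` (whose coefficient matrices are
skew-symmetric), and `(T,e₁,e₂)` is an orthonormal basis at one point `(t₀,x₀)`, then it is
an orthonormal basis everywhere on `I × J`. -/
theorem stmt_2
    (I J : Set ℝ) (hIopen : IsOpen I) (hIint : I.OrdConnected)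
    (hJopen : IsOpen J) (hJint : J.OrdConnected)
    (ψ : ℝ → ℝ → ℂ) (γ : ℝ → ℝ → ℝ)
    (hψreg : ContDiffOn ℝ 1 (fun p : ℝ × ℝ => ψ p.1 p.2) (I ×ˢ J))
    (hγcont : ContinuousOn (fun p : ℝ × ℝ => γ p.1 p.2) (I ×ˢ J))
    (T e₁ e₂ : ℝ → ℝ → Fin 3 → ℝ) (N : ℝ → ℝ → Fin 3 → ℂ)
    (hTreg : ContDiffOn ℝ 1 (fun p : ℝ × ℝ => T p.1 p.2) (I ×ˢ J))
    (he₁reg : ContDiffOn ℝ 1 (fun p : ℝ × ℝ => e₁ p.1 p.2) (I ×ˢ J))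
    (he₂reg : ContDiffOn ℝ 1 (fun p : ℝ × ℝ => e₂ p.1 p.2) (I ×ˢ J))
    -- N = e₁ + i e₂
    (hN : ∀ t ∈ I, ∀ x ∈ J, ∀ i : Fin 3,
      N t x i = (e₁ t x i : ℂ) + Complex.I * (e₂ t x i : ℂ))
    -- the two first-order systems
    (hTx : ∀ t ∈ I, ∀ x ∈ J,
      deriv (fun y => T t y) x = fun i => ((starRingEnd ℂ) (ψ t x) * N t x i).re)
    (hNx : ∀ t ∈ I, ∀ x ∈ J,
      deriv (fun y => N t y) x = fun i => -(ψ t x) * (T t x i : ℂ))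
    (hTt : ∀ t ∈ I, ∀ x ∈ J,
      deriv (fun s => T s x) t
        = fun i => ((starRingEnd ℂ) (deriv (fun y => ψ t y) x) * N t x i).im)
    (hNt : ∀ t ∈ I, ∀ x ∈ J,
      deriv (fun s => N s x) t
        = fun i => -Complex.I * deriv (fun y => ψ t y) x * (T t x i : ℂ)
            + Complex.I * (γ t x : ℂ) * N t x i)
    (t₀ : ℝ) (ht₀ : t₀ ∈ I) (x₀ : ℝ) (hx₀ : x₀ ∈ J)
    (hON₀ : IsOrthonormalTriple (T t₀ x₀) (e₁ t₀ x₀) (e₂ t₀ x₀)) :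
    ∀ t ∈ I, ∀ x ∈ J, IsOrthonormalTriple (T t x) (e₁ t x) (e₂ t x) := by
  have hsymm : ∀ a b : Fin 3 → ℝ, dot3 a b = dot3 b a :=
    fun a b => Finset.sum_congr rfl fun i _ => mul_comm _ _
  -- Step 1: propagate in x at t = t₀
  have step1 : ∀ x ∈ J, ∀ i k,
      dot3 (![T t₀ x, e₁ t₀ x, e₂ t₀ x] i) (![T t₀ x, e₁ t₀ x, e₂ t₀ x] k)
        = if i = k then 1 else 0 := by
    refine frame_ortho J hJopen hJint (fun y => ![T t₀ y, e₁ t₀ y, e₂ t₀ y])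
      (fun y => ![![0, (ψ t₀ y).re, (ψ t₀ y).im],
                  ![-(ψ t₀ y).re, 0, 0], ![-(ψ t₀ y).im, 0, 0]])
      ?_ ?_ ?_ x₀ hx₀ ?_
    · -- continuity
      have hψc : ContinuousOn (fun y => ψ t₀ y) J :=
        hψreg.continuousOn.comp
          (Continuous.continuousOn (continuous_const.prodMk continuous_id))
          (fun y hy => ⟨ht₀, hy⟩)
      have hre := Complex.continuous_re.comp_continuousOn hψc
      have him := Complex.continuous_im.comp_continuousOn hψc
      apply continuousOn_pi.mpr
      intro i
      apply continuousOn_pi.mpr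
      intro j
      fin_cases i <;> fin_cases j <;>
        simp only [Matrix.cons_val_zero, Matrix.cons_val_one, Matrix.head_cons,
          Matrix.cons_val_two, Matrix.tail_cons, Matrix.vecHead, Matrix.vecTail, Fin.isValue] <;>
        first
          | exact continuousOn_const
          | exact hre
          | exact him
          | exact hre.neg
          | exact him.neg
    · -- skew-symmetry
      intro y _ i j
      fin_cases i <;> fin_cases j <;>
        simp [Matrix.cons_val_zero, Matrix.cons_val_one, Matrix.head_cons,
          Matrix.cons_val_two, Matrix.tail_cons, Matrix.vecHead, Matrix.vecTail]
    · -- derivatives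
      intro x hx i
      have hNev : ∀ᶠ z in nhds x, ∀ i, N t₀ z i = (e₁ t₀ z i : ℂ) + Complex.I * e₂ t₀ z i :=
        Filter.eventually_of_mem (hJopen.mem_nhds hx) fun z hz i => hN t₀ ht₀ z hz i
      have hder := pi_complex_deriv (partialDiffAt_snd hIopen hJopen he₁reg ht₀ hx)
        (partialDiffAt_snd hIopen hJopen he₂reg ht₀ hx) hNev (hNx t₀ ht₀ x hx)
      have hT : HasDerivAt (fun y => T t₀ y)
          (fun i => ((starRingEnd ℂ) (ψ t₀ x) * N t₀ x i).re) x := by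
        have h := (partialDiffAt_snd hIopen hJopen hTreg ht₀ hx).hasDerivAt
        rwa [hTx t₀ ht₀ x hx] at h
      fin_cases i
      · convert hT using 1
        · rfl
        funext m
        rw [hN t₀ ht₀ x hx m]
        simp [Fin.sum_univ_three, Complex.mul_re, Complex.mul_im, Complex.add_re,
          Complex.add_im, Complex.I_re, Complex.I_im, Complex.ofReal_re, Complex.ofReal_im,
          Matrix.cons_val_zero, Matrix.cons_val_one, Matrix.head_cons,
          Matrix.cons_val_two, Matrix.tail_cons, Matrix.vecHead, Matrix.vecTail]
        all_goals ring
      · convert hder.1 using 1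
        · rfl
        funext m
        simp [Fin.sum_univ_three, Complex.mul_re, Complex.mul_im, Complex.neg_re,
          Complex.ofReal_re, Complex.ofReal_im,
          Matrix.cons_val_zero, Matrix.cons_val_one, Matrix.head_cons,
          Matrix.cons_val_two, Matrix.tail_cons, Matrix.vecHead, Matrix.vecTail]
        all_goals ring
      · convert hder.2 using 1
        · rfl
        funext m
        simp [Fin.sum_univ_three, Complex.mul_re, Complex.mul_im, Complex.neg_im,
          Complex.ofReal_re, Complex.ofReal_im,
          Matrix.cons_val_zero, Matrix.cons_val_one, Matrix.head_cons,
          Matrix.cons_val_two, Matrix.tail_cons, Matrix.vecHead, Matrix.vecTail]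
        all_goals ring
    · -- initial condition
      obtain ⟨p1, p2, p3, p4, p5, p6⟩ := hON₀
      have p4' : dot3 (e₁ t₀ x₀) (T t₀ x₀) = 0 := (hsymm _ _).trans p4
      have p5' : dot3 (e₂ t₀ x₀) (T t₀ x₀) = 0 := (hsymm _ _).trans p5
      have p6' : dot3 (e₂ t₀ x₀) (e₁ t₀ x₀) = 0 := (hsymm _ _).trans p6
      intro i k
      fin_cases i <;> fin_cases k <;>
        simp [Matrix.cons_val_zero, Matrix.cons_val_one, Matrix.head_cons,
          Matrix.cons_val_two, Matrix.tail_cons, Matrix.vecHead, Matrix.vecTail, p1, p2, p3, p4, p5, p6, p4', p5', p6']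
  -- Step 2: propagate in t at fixed x
  intro t ht x hx
  have hDeq : ∀ s ∈ I, deriv (fun y => ψ s y) x
      = (fderiv ℝ (fun p : ℝ × ℝ => ψ p.1 p.2) (s, x)) (0, 1) := by
    intro s hs
    have hdiff : DifferentiableAt ℝ (fun p : ℝ × ℝ => ψ p.1 p.2) (s, x) :=
      (hψreg.differentiableOn one_ne_zero).differentiableAt
        ((hIopen.prod hJopen).mem_nhds ⟨hs, hx⟩)
    have h2 : HasDerivAt (fun y => ψ s y)
        ((fderiv ℝ (fun p : ℝ × ℝ => ψ p.1 p.2) (s, x)) (0, 1)) x :=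
      hdiff.hasFDerivAt.comp_hasDerivAt x ((hasDerivAt_const x s).prodMk (hasDerivAt_id x))
    exact h2.deriv
  have hDcont : ContinuousOn (fun s => deriv (fun y => ψ s y) x) I := by
    have hfd : ContinuousOn (fderiv ℝ (fun p : ℝ × ℝ => ψ p.1 p.2)) (I ×ˢ J) :=
      hψreg.continuousOn_fderiv_of_isOpen (hIopen.prod hJopen) le_rfl
    have hcomp : ContinuousOn
        (fun s => (fderiv ℝ (fun p : ℝ × ℝ => ψ p.1 p.2) (s, x)) ((0:ℝ), (1:ℝ))) I := by
      apply (ContinuousLinearMap.apply ℝ ℂ ((0:ℝ), (1:ℝ))).continuous.comp_continuousOn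
      exact hfd.comp (Continuous.continuousOn (continuous_id.prodMk continuous_const))
        (fun s hs => ⟨hs, hx⟩)
    exact ContinuousOn.congr hcomp (fun s hs => hDeq s hs)
  have hγx : ContinuousOn (fun s => γ s x) I :=
    hγcont.comp (Continuous.continuousOn (continuous_id.prodMk continuous_const))
      (fun s hs => ⟨hs, hx⟩)
  have step2 : ∀ s ∈ I, ∀ i k,
      dot3 (![T s x, e₁ s x, e₂ s x] i) (![T s x, e₁ s x, e₂ s x] k)
        = if i = k then 1 else 0 := by
    refine frame_ortho I hIopen hIint (fun s => ![T s x, e₁ s x, e₂ s x])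
      (fun s => ![![0, -(deriv (fun y => ψ s y) x).im, (deriv (fun y => ψ s y) x).re],
                  ![(deriv (fun y => ψ s y) x).im, 0, -(γ s x)],
                  ![-(deriv (fun y => ψ s y) x).re, γ s x, 0]])
      ?_ ?_ ?_ t₀ ht₀ ?_
    · -- continuity
      have hre := Complex.continuous_re.comp_continuousOn hDcont
      have him := Complex.continuous_im.comp_continuousOn hDcont
      apply continuousOn_pi.mpr
      intro i
      apply continuousOn_pi.mpr
      intro j
      fin_cases i <;> fin_cases j <;>
        simp only [Matrix.cons_val_zero, Matrix.cons_val_one, Matrix.head_cons,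
          Matrix.cons_val_two, Matrix.tail_cons, Matrix.vecHead, Matrix.vecTail, Fin.isValue] <;>
        first
          | exact continuousOn_const
          | exact hre
          | exact him
          | exact hre.neg
          | exact him.neg
          | exact hγx
          | exact hγx.neg
    · -- skew-symmetry
      intro s _ i j
      fin_cases i <;> fin_cases j <;>
        simp [Matrix.cons_val_zero, Matrix.cons_val_one, Matrix.head_cons,
          Matrix.cons_val_two, Matrix.tail_cons, Matrix.vecHead, Matrix.vecTail]
    · -- derivatives
      intro s hs i
      have hNev : ∀ᶠ z in nhds s, ∀ i, N z x i = (e₁ z x i : ℂ) + Complex.I * e₂ z x i :=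
        Filter.eventually_of_mem (hIopen.mem_nhds hs) fun z hz i => hN z hz x hx i
      have hder := pi_complex_deriv (partialDiffAt_fst hIopen hJopen he₁reg hs hx)
        (partialDiffAt_fst hIopen hJopen he₂reg hs hx) hNev (hNt s hs x hx)
      have hT : HasDerivAt (fun s' => T s' x)
          (fun i => ((starRingEnd ℂ) (deriv (fun y => ψ s y) x) * N s x i).im) s := by
        have h := (partialDiffAt_fst hIopen hJopen hTreg hs hx).hasDerivAt
        rwa [hTt s hs x hx] at h
      fin_cases i
      · convert hT using 1
        · rfl
        funext m
        rw [hN s hs x hx m]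
        simp [Fin.sum_univ_three, Complex.mul_re, Complex.mul_im, Complex.add_re,
          Complex.add_im, Complex.I_re, Complex.I_im, Complex.ofReal_re, Complex.ofReal_im,
          Matrix.cons_val_zero, Matrix.cons_val_one, Matrix.head_cons,
          Matrix.cons_val_two, Matrix.tail_cons, Matrix.vecHead, Matrix.vecTail]
        all_goals ring
      · convert hder.1 using 1
        · rfl
        funext m
        rw [hN s hs x hx m]
        simp [Fin.sum_univ_three, Complex.mul_re, Complex.mul_im, Complex.add_re,
          Complex.add_im, Complex.neg_re, Complex.neg_im, Complex.I_re, Complex.I_im,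
          Complex.ofReal_re, Complex.ofReal_im,
          Matrix.cons_val_zero, Matrix.cons_val_one, Matrix.head_cons,
          Matrix.cons_val_two, Matrix.tail_cons, Matrix.vecHead, Matrix.vecTail]
        all_goals ring
      · convert hder.2 using 1
        · rfl
        funext m
        rw [hN s hs x hx m]
        simp [Fin.sum_univ_three, Complex.mul_re, Complex.mul_im, Complex.add_re,
          Complex.add_im, Complex.neg_re, Complex.neg_im, Complex.I_re, Complex.I_im,
          Complex.ofReal_re, Complex.ofReal_im,
          Matrix.cons_val_zero, Matrix.cons_val_one, Matrix.head_cons,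
          Matrix.cons_val_two, Matrix.tail_cons, Matrix.vecHead, Matrix.vecTail]
        all_goals ring
    · -- initial condition at t₀ comes from step 1
      exact step1 x hx
  have h2 := step2 t ht
  refine ⟨?_, ?_, ?_, ?_, ?_, ?_⟩
  · simpa using h2 0 0
  · simpa using h2 1 1
  · simpa using h2 2 2
  · simpa using h2 0 1
  · simpa using h2 0 2
  · simpa using h2 1 2
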